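/- The ideal $I = \bigcup_{s' \in S} \ker(\alpha_{s'})$ of $A$ satisfies $\alpha_s^{-1}(I) = I$ for all $s \in S$ and $\alpha_t(I) \subseteq I$ for all $t \in T$. Consequently, $\alpha$ induces a monoid action $\alpha': T \to \mathrm{Endr}(A/I)$ with $\alpha'_s$ injective for all $s \in S$. -/

import Mathlib

/-- The set `I = ⋃_{s' ∈ S} ker α_{s'}` is a two-sided ideal of `A`
satisfying `α_s⁻¹(I) = I` for `s ∈ S` and `α_t(I) ⊆ I` for `t ∈ T`; consequently `α`
descends to `A/I` (it is well defined modulo `I`) and the induced maps are injective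
for `s ∈ S`. -/
theorem stmt11 {A T : Type*} [Ring A] [Monoid T]
    (S : Submonoid T) (α : T → A → A)
    (hadd : ∀ (t : T) (a b : A), α t (a + b) = α t a + α t b)
    (hmul : ∀ (t : T) (a b : A), α t (a * b) = α t a * α t b)
    (hone : ∀ a : A, α 1 a = a)
    (hcomp : ∀ (s t : T) (a : A), α (s * t) a = α s (α t a))
    (hOre : ∀ (s : S) (t : T), ∃ (s' : S) (t' : T), (s' : T) * t = t' * s)
    (hRev : ∀ (t u : T) (s : S), t * s = u * s → ∃ s' : S, (s' : T) * t = (s' : T) * u)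
    (hSat : ∀ (t : T) (s : S), t * (s : T) ∈ S → t ∈ S) :
    letI I : Set A := {a | ∃ s' : S, α (s' : T) a = 0}
    (∃ J : TwoSidedIdeal A, ∀ a : A, a ∈ J ↔ a ∈ I) ∧
    (∀ s : S, α (s : T) ⁻¹' I = I) ∧
    (∀ t : T, α t '' I ⊆ I) ∧
    (∀ (t : T) (a b : A), a - b ∈ I → α t a - α t b ∈ I) ∧
    (∀ (s : S) (a : A), α (s : T) a ∈ I → a ∈ I) := by
  set I : Set A := {a | ∃ s' : S, α (s' : T) a = 0} with hI
  -- basic facts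
  have hzero : ∀ t : T, α t 0 = 0 := by
    intro t
    have := hadd t 0 0
    simp only [add_zero] at this
    exact (left_eq_add.mp this)
  have hneg : ∀ (t : T) (a : A), α t (-a) = - α t a := by
    intro t a
    have := hadd t a (-a)
    simp only [add_neg_cancel, hzero] at this
    exact eq_neg_of_add_eq_zero_right this.symm
  have hsub : ∀ (t : T) (a b : A), α t (a - b) = α t a - α t b := by
    intro t a b
    rw [sub_eq_add_neg, hadd, hneg, sub_eq_add_neg]
  -- stability under all α t
  have hstab : ∀ (t : T) (a : A), a ∈ I → α t a ∈ I := by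
    rintro t a ⟨s', hs'⟩
    obtain ⟨s'', t', h⟩ := hOre s' t
    exact ⟨s'', by rw [← hcomp, h, hcomp, hs', hzero]⟩
  -- directedness / add_mem
  have haddmem : ∀ {a b : A}, a ∈ I → b ∈ I → a + b ∈ I := by
    rintro a b ⟨s1, h1⟩ ⟨s2, h2⟩
    obtain ⟨s', t', h⟩ := hOre s2 (s1 : T)
    refine ⟨⟨(s' : T) * s1, mul_mem s'.2 s1.2⟩, ?_⟩
    have ha : α ((s' : T) * s1) a = 0 := by rw [hcomp, h1, hzero]
    have hb : α ((s' : T) * s1) b = 0 := by rw [h, hcomp, h2, hzero]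
    rw [hadd]
    try simp only at ha hb
    rw [ha, hb, add_zero]
  refine ⟨⟨TwoSidedIdeal.mk' I ⟨1, hzero 1⟩ haddmem
      (fun {x} ⟨s, hs⟩ => ⟨s, by rw [hneg, hs, neg_zero]⟩)
      (fun {x y} ⟨s, hs⟩ => ⟨s, by rw [hmul, hs, mul_zero]⟩)
      (fun {x y} ⟨s, hs⟩ => ⟨s, by rw [hmul, hs, zero_mul]⟩),
      fun a => TwoSidedIdeal.mem_mk' _ _ _ _ _ _ a⟩, ?_, ?_, ?_, ?_⟩
  · intro s
    ext a
    constructor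
    · rintro ⟨s', hs'⟩
      exact ⟨⟨(s' : T) * s, mul_mem s'.2 s.2⟩, by rw [hcomp]; exact hs'⟩
    · intro ha
      exact hstab _ a ha
  · rintro t _ ⟨a, ha, rfl⟩
    exact hstab t a ha
  · intro t a b hab
    rw [← hsub]
    exact hstab t _ hab
  · rintro s a ⟨s', hs'⟩
    exact ⟨⟨(s' : T) * s, mul_mem s'.2 s.2⟩, by rw [hcomp]; exact hs'⟩
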